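/- Let M ⊆ ℝ³ be a finite set. Then M is not basic if and only if there exists a function w : M → ℤ, not identically zero, such that for each coordinate index i ∈ {1,2,3} and each real value c, the sum of w over the points of M whose i-th coordinate equals c is zero. -/

import Mathlib

/-- A set `M ⊆ ℝ³` is *basic* if every real-valued function on `M` decomposes as a sum of
functions of the three separate coordinates. -/
def IsBasic (M : Set (Fin 3 → ℝ)) : Prop :=
  ∀ f : (Fin 3 → ℝ) → ℝ, ∃ f₁ f₂ f₃ : ℝ → ℝ,
    ∀ p ∈ M, f p = f₁ (p 0) + f₂ (p 1) + f₃ (p 2)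

/-- A finite set `M ⊆ ℝ³` is not basic iff its points admit integer weights, not all
zero, such that the weights in every layer sum to zero. -/
theorem not_basic_iff_weights (M : Set (Fin 3 → ℝ)) (hfin : M.Finite) :
    ¬ IsBasic M ↔ ∃ w : (Fin 3 → ℝ) → ℤ, (∃ p ∈ M, w p ≠ 0) ∧
      ∀ (i : Fin 3) (c : ℝ), (∑ᶠ p ∈ {q ∈ M | q i = c}, w p) = 0 := by
  classical
  set s : Finset (Fin 3 → ℝ) := hfin.toFinset with hs
  have hmem : ∀ p, p ∈ s ↔ p ∈ M := fun p => hfin.mem_toFinset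
  have hconv : ∀ (w : (Fin 3 → ℝ) → ℤ) (i : Fin 3) (c : ℝ),
      (∑ᶠ p ∈ {q ∈ M | q i = c}, w p)
        = ∑ p ∈ s.filter (fun q => q i = c), w p := by
    intro w i c
    rw [← finsum_mem_coe_finset]
    congr 1
    ext q
    simp [hmem q]
  constructor
  · intro hnb
    set χ : Fin 3 × {x // x ∈ s} → EuclideanSpace ℝ {x // x ∈ s} :=
      fun iq => WithLp.toLp 2 (fun p : {x // x ∈ s} => if p.1 iq.1 = iq.2.1 iq.1 then (1 : ℝ) else 0) with hχ
    by_cases hspan : Submodule.span ℝ (Set.range χ) = ⊤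
    · -- the layer indicators span everything, so M is basic, contradiction
      exfalso; apply hnb
      intro f
      have hf : WithLp.toLp 2 (fun p : {x // x ∈ s} => f p.1) ∈ Submodule.span ℝ (Set.range χ) := by
        rw [hspan]; trivial
      obtain ⟨a, ha⟩ := (Submodule.mem_span_range_iff_exists_fun ℝ).mp hf
      refine ⟨fun c => ∑ q : {x // x ∈ s}, if c = q.1 0 then a (0, q) else 0,
              fun c => ∑ q : {x // x ∈ s}, if c = q.1 1 then a (1, q) else 0,
              fun c => ∑ q : {x // x ∈ s}, if c = q.1 2 then a (2, q) else 0, ?_⟩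
      intro p hp
      have hps : p ∈ s := (hmem p).mpr hp
      have h1 := congrArg (fun v => v ⟨p, hps⟩) ha
      simp only [WithLp.ofLp_sum, WithLp.ofLp_smul, WithLp.ofLp_toLp, Finset.sum_apply, Pi.smul_apply, smul_eq_mul, hχ] at h1
      rw [← h1, Fintype.sum_prod_type, Fin.sum_univ_three]
      have hco : ∀ i : Fin 3,
          (∑ q : {x // x ∈ s}, a (i, q) * if p i = q.1 i then (1:ℝ) else 0)
          = ∑ q : {x // x ∈ s}, if p i = q.1 i then a (i, q) else 0 := by
        intro i
        refine Finset.sum_congr rfl fun q _ => ?_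
        rw [mul_ite, mul_one, mul_zero]
      rw [hco 0, hco 1, hco 2]
    · -- otherwise there is a nonzero real weight orthogonal to all layers
      have hbot : (Submodule.span ℝ (Set.range χ))ᗮ ≠ ⊥ := fun h =>
        hspan (Submodule.orthogonal_eq_bot_iff.mp h)
      obtain ⟨w, hwmem, hwne⟩ := Submodule.exists_mem_ne_zero_of_ne_bot hbot
      have horth : ∀ iq, (inner ℝ (χ iq) w : ℝ) = 0 := fun iq =>
        (Submodule.mem_orthogonal _ w).mp hwmem (χ iq) (Submodule.subset_span ⟨iq, rfl⟩)
      have hw : ∀ (i : Fin 3) (c : ℝ),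
          ∑ p : {x // x ∈ s}, (if p.1 i = c then w p else 0) = 0 := by
        intro i c
        by_cases hc : ∃ q : {x // x ∈ s}, q.1 i = c
        · obtain ⟨q, hq⟩ := hc
          have h2 := horth (i, q)
          rw [PiLp.inner_apply] at h2
          simpa [hχ, hq, RCLike.inner_apply, starRingEnd_apply, ite_mul] using h2
        · push_neg at hc
          exact Finset.sum_eq_zero fun p _ => by simp [hc p]
      have hex : ∃ p, w p ≠ 0 := by
        by_contra h
        push_neg at h
        exact hwne (by ext p; exact h p)
      obtain ⟨p₀, hp₀⟩ := hex
      -- descend to ℚ via a coordinate functional of a ℚ-basis of ℝ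
      set b := Module.Basis.ofVectorSpace ℚ ℝ with hbdef
      have hbne : b.repr (w p₀) ≠ 0 := fun h => hp₀ (b.repr.map_eq_zero_iff.mp h)
      obtain ⟨idx, hidx⟩ := Finsupp.ne_iff.mp hbne
      set φ : ℝ →ₗ[ℚ] ℚ := (Finsupp.lapply idx) ∘ₗ (b.repr : ℝ →ₗ[ℚ] _) with hφdef
      set w' : {x // x ∈ s} → ℚ := fun p => φ (w p) with hw'def
      have hw'eq : ∀ p, w' p = b.repr (w p) idx := fun p => by
        simp [hw'def, hφdef]
      have hw'p₀ : w' p₀ ≠ 0 := by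
        rw [hw'eq]
        simpa using hidx
      have hw' : ∀ (i : Fin 3) (c : ℝ),
          ∑ p : {x // x ∈ s}, (if p.1 i = c then w' p else 0) = 0 := by
        intro i c
        have h3 := congrArg φ (hw i c)
        rw [map_sum] at h3
        simpa [apply_ite φ] using h3
      -- clear denominators
      set d : ℕ := ∏ p : {x // x ∈ s}, (w' p).den with hddef
      have hd : ∀ p, (w' p).den ∣ d := fun p => Finset.dvd_prod_of_mem _ (Finset.mem_univ p)
      have hdne : (d : ℚ) ≠ 0 := by
        have : 0 < d := Finset.prod_pos fun p _ => (w' p).pos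
        exact_mod_cast this.ne'
      set z : {x // x ∈ s} → ℤ := fun p => (w' p).num * ((d / (w' p).den : ℕ) : ℤ) with hzdef
      have hcast : ∀ p, (z p : ℚ) = (d : ℚ) * w' p := by
        intro p
        obtain ⟨k, hk⟩ := hd p
        have hden : ((w' p).den : ℚ) ≠ 0 := by exact_mod_cast (w' p).den_ne_zero
        have hdk : d / (w' p).den = k := by rw [hk]; exact Nat.mul_div_cancel_left _ (w' p).pos
        have hnum : ((w' p).den : ℚ) * w' p = (w' p).num := by
          have h := Rat.num_div_den (w' p)
          rw [div_eq_iff hden] at h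
          rw [mul_comm]
          exact h.symm
        have h8 : (z p : ℚ) = (w' p).num * (k : ℚ) := by
          rw [hzdef]; push_cast [hdk]; ring
        rw [h8, hk]
        push_cast
        rw [mul_comm ((w' p).den : ℚ) (k : ℚ), mul_assoc, hnum, mul_comm]
      have hz0 : z p₀ ≠ 0 := by
        intro h
        have h9 : (d : ℚ) * w' p₀ = 0 := by rw [← hcast p₀]; exact_mod_cast h
        exact hw'p₀ ((mul_eq_zero.mp h9).resolve_left hdne)
      have hz : ∀ (i : Fin 3) (c : ℝ),
          ∑ p : {x // x ∈ s}, (if p.1 i = c then z p else 0) = 0 := by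
        intro i c
        have : ((∑ p : {x // x ∈ s}, (if p.1 i = c then z p else 0) : ℤ) : ℚ) = 0 := by
          push_cast
          have : ∀ p : {x // x ∈ s}, (if p.1 i = c then (z p : ℚ) else 0)
              = (d : ℚ) * (if p.1 i = c then w' p else 0) := by
            intro p
            by_cases h : p.1 i = c <;> simp [h, hcast p]
          rw [Finset.sum_congr rfl fun p _ => this p, ← Finset.mul_sum, hw' i c, mul_zero]
        exact_mod_cast this
      refine ⟨fun p => if h : p ∈ s then z ⟨p, h⟩ else 0, ⟨p₀.1, (hmem _).mp p₀.2, ?_⟩, ?_⟩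
      · simpa [p₀.2] using hz0
      · intro i c
        rw [hconv, Finset.sum_filter, ← Finset.sum_coe_sort s]
        rw [show (∑ p : {x // x ∈ s}, if (p : Fin 3 → ℝ) i = c
              then (if h : (p : Fin 3 → ℝ) ∈ s then z ⟨p, h⟩ else 0) else 0)
            = ∑ p : {x // x ∈ s}, (if p.1 i = c then z p else 0) from
          Finset.sum_congr rfl fun p _ => by simp [p.2]]
        exact hz i c
  · rintro ⟨w, ⟨p₀, hp₀M, hwp₀⟩, hlayer⟩ hb
    obtain ⟨f₁, f₂, f₃, hf⟩ := hb (fun p => if p = p₀ then 1 else 0)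
    have hL : ∀ (i : Fin 3) (c : ℝ), ∑ p ∈ s.filter (fun q => q i = c), (w p : ℝ) = 0 := by
      intro i c
      have h4 := hlayer i c
      rw [hconv] at h4
      exact_mod_cast congrArg (Int.cast : ℤ → ℝ) h4
    have key : ∀ (i : Fin 3) (g : ℝ → ℝ), ∑ p ∈ s, (w p : ℝ) * g (p i) = 0 := by
      intro i g
      rw [← Finset.sum_fiberwise_of_maps_to (t := s.image (fun p => p i))
        (fun p hp => Finset.mem_image_of_mem _ hp) (fun p => (w p : ℝ) * g (p i))]
      refine Finset.sum_eq_zero fun c _ => ?_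
      have h5 : ∑ p ∈ s.filter (fun q => q i = c), (w p : ℝ) * g (p i)
          = ∑ p ∈ s.filter (fun q => q i = c), (w p : ℝ) * g c := by
        refine Finset.sum_congr rfl fun p hp => ?_
        rw [(Finset.mem_filter.mp hp).2]
      rw [h5, ← Finset.sum_mul, hL, zero_mul]
    have hsum : ∑ p ∈ s, (w p : ℝ) * (if p = p₀ then 1 else 0) = (w p₀ : ℝ) := by
      have h7 : ∀ p ∈ s, (w p : ℝ) * (if p = p₀ then 1 else 0)
          = (if p = p₀ then (w p : ℝ) else 0) := fun p _ => by
        rw [mul_ite, mul_one, mul_zero]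
      rw [Finset.sum_congr rfl h7,
        Finset.sum_ite_eq' s p₀ (fun p => (w p : ℝ)), if_pos ((hmem p₀).mpr hp₀M)]
    have hsum2 : ∑ p ∈ s, (w p : ℝ) * (if p = p₀ then 1 else 0) = 0 := by
      have h6 : ∀ p ∈ s, (w p : ℝ) * (if p = p₀ then 1 else 0)
          = (w p : ℝ) * f₁ (p 0) + (w p : ℝ) * f₂ (p 1) + (w p : ℝ) * f₃ (p 2) := by
        intro p hp
        rw [show (if p = p₀ then (1:ℝ) else 0) = f₁ (p 0) + f₂ (p 1) + f₃ (p 2) from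
          hf p ((hmem p).mp hp)]
        ring
      rw [Finset.sum_congr rfl h6, Finset.sum_add_distrib, Finset.sum_add_distrib,
        key 0 f₁, key 1 f₂, key 2 f₃]
      ring
    rw [hsum] at hsum2
    exact hwp₀ (by exact_mod_cast hsum2)
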